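/- Let H, K be Hilbert spaces and (e_i)_{i∈I} a normalized tight frame for H, (f_i)_{i∈I} a family in K such that (e_i ⊕ f_i)_{i∈I} is a normalized tight frame for H ⊕ K. Then for every g ∈ H, Σ_{i∈I} ⟨g, e_i⟩ f_i = 0 (the series converging in K). -/

import Mathlib

open scoped InnerProductSpace
open Complex

private lemma summable_of_tsum_eq {I : Type*} {F : I → ℝ}
    {c : ℝ} (h : ∑' i, F i = c) (hc : c = 0 → ∀ i, F i = 0) : Summable F := by
  by_contra hs
  have h0 := tsum_eq_zero_of_not_summable hs
  rw [h0] at h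
  have hz := hc h.symm
  exact hs (by simpa [funext hz] using (summable_zero : Summable (fun _ : I => (0:ℝ))))

private lemma le_of_sq_le_mul {a b : ℝ} (ha : 0 < a) (h : a ^ 2 ≤ b * a) : a ≤ b := by
  nlinarith

private lemma re_conj_mul (a b : ℂ) :
    ((starRingEnd ℂ) a * b).re = (‖a + b‖ ^ 2 - ‖a‖ ^ 2 - ‖b‖ ^ 2) / 2 := by
  rw [Complex.sq_norm, Complex.sq_norm, Complex.sq_norm]
  simp [Complex.normSq_apply, Complex.mul_re, Complex.conj_re, Complex.conj_im]
  ring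

/-- Let `(e i)` be a normalized tight frame for `H` and `(f i)` a family in
`K` such that `(e i ⊕ f i)` is a normalized tight frame for `H ⊕ K` (where
`⟨h₁⊕k₁, h₂⊕k₂⟩ = ⟨h₁,h₂⟩ + ⟨k₁,k₂⟩`, so that
`|⟨(g,k),(e i,f i)⟩|² = ‖⟨g,e i⟩ + ⟨k,f i⟩‖²`).  Then for every `g ∈ H` the series
`∑ i ⟨g, e i⟩ f i` converges to `0` in `K`.  (Paper convention: `⟨·,·⟩` is linear in the
first variable, so `⟨g, e i⟩ = ⟪e i, g⟫_ℂ` in Mathlib's convention.) -/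
theorem stmt_3 {H K : Type*} [NormedAddCommGroup H] [InnerProductSpace ℂ H] [CompleteSpace H]
    [NormedAddCommGroup K] [InnerProductSpace ℂ K] [CompleteSpace K]
    {I : Type*} (e : I → H) (f : I → K)
    (hframe : ∀ g : H, ∑' i : I, ‖⟪g, e i⟫_ℂ‖ ^ 2 = ‖g‖ ^ 2)
    (hsuper : ∀ (g : H) (k : K),
      ∑' i : I, ‖⟪g, e i⟫_ℂ + ⟪k, f i⟫_ℂ‖ ^ 2 = ‖g‖ ^ 2 + ‖k‖ ^ 2) :
    ∀ g : H, HasSum (fun i : I => ⟪e i, g⟫_ℂ • f i) 0 := by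
  -- `f` is also a normalized tight frame for `K`
  have hf : ∀ k : K, ∑' i : I, ‖⟪k, f i⟫_ℂ‖ ^ 2 = ‖k‖ ^ 2 := by
    intro k
    have := hsuper 0 k
    simpa using this
  -- summability facts
  have hsa : ∀ g : H, Summable (fun i : I => ‖⟪g, e i⟫_ℂ‖ ^ 2) := by
    intro g
    refine summable_of_tsum_eq (hframe g) (fun h0 i => ?_)
    have hg : g = 0 := by
      have : ‖g‖ = 0 := by nlinarith [norm_nonneg g]
      simpa using this
    simp [hg]
  have hsb : ∀ k : K, Summable (fun i : I => ‖⟪k, f i⟫_ℂ‖ ^ 2) := by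
    intro k
    refine summable_of_tsum_eq (hf k) (fun h0 i => ?_)
    have hk : k = 0 := by
      have : ‖k‖ = 0 := by nlinarith [norm_nonneg k]
      simpa using this
    simp [hk]
  have hsab : ∀ (g : H) (k : K),
      Summable (fun i : I => ‖⟪g, e i⟫_ℂ + ⟪k, f i⟫_ℂ‖ ^ 2) := by
    intro g k
    refine summable_of_tsum_eq (hsuper g k) (fun h0 i => ?_)
    have hg : g = 0 := by
      have : ‖g‖ = 0 := by nlinarith [norm_nonneg g, norm_nonneg k, sq_nonneg ‖g‖, sq_nonneg ‖k‖]
      simpa using this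
    have hk : k = 0 := by
      have : ‖k‖ = 0 := by nlinarith [norm_nonneg g, norm_nonneg k, sq_nonneg ‖g‖, sq_nonneg ‖k‖]
      simpa using this
    simp [hg, hk]
  -- real part of the cross term sums to 0
  have hre : ∀ (g : H) (k : K),
      HasSum (fun i : I => (⟪e i, g⟫_ℂ * ⟪k, f i⟫_ℂ).re) 0 := by
    intro g k
    have h1 : HasSum (fun i : I => ‖⟪g, e i⟫_ℂ + ⟪k, f i⟫_ℂ‖ ^ 2) (‖g‖ ^ 2 + ‖k‖ ^ 2) :=
      hsuper g k ▸ (hsab g k).hasSum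
    have h2 : HasSum (fun i : I => ‖⟪g, e i⟫_ℂ‖ ^ 2) (‖g‖ ^ 2) :=
      hframe g ▸ (hsa g).hasSum
    have h3 : HasSum (fun i : I => ‖⟪k, f i⟫_ℂ‖ ^ 2) (‖k‖ ^ 2) :=
      hf k ▸ (hsb k).hasSum
    have h4 := ((h1.sub h2).sub h3).div_const 2
    have heq : (fun i : I =>
        (‖⟪g, e i⟫_ℂ + ⟪k, f i⟫_ℂ‖ ^ 2 - ‖⟪g, e i⟫_ℂ‖ ^ 2 - ‖⟪k, f i⟫_ℂ‖ ^ 2) / 2)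
        = fun i : I => (⟪e i, g⟫_ℂ * ⟪k, f i⟫_ℂ).re := by
      funext i
      rw [← re_conj_mul, ← inner_conj_symm (e i) g]
    rw [heq] at h4
    simpa using h4
  -- full cross term sums to 0
  have hcross : ∀ (g : H) (k : K),
      HasSum (fun i : I => ⟪e i, g⟫_ℂ * ⟪k, f i⟫_ℂ) 0 := by
    intro g k
    rw [Complex.hasSum_iff]
    refine ⟨by simpa using hre g k, ?_⟩
    have him := hre (Complex.I • g) k
    have heq : (fun i : I => (⟪e i, Complex.I • g⟫_ℂ * ⟪k, f i⟫_ℂ).re)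
        = fun i : I => -((⟪e i, g⟫_ℂ * ⟪k, f i⟫_ℂ).im) := by
      funext i
      rw [inner_smul_right, mul_assoc]
      simp [Complex.mul_re]
    rw [heq] at him
    simpa using him.neg
  intro g
  set c : I → ℂ := fun i => ⟪e i, g⟫_ℂ with hcdef
  have hcs : Summable (fun i : I => ‖c i‖ ^ 2) :=
    (hsa g).congr (fun i => by rw [norm_inner_symm])
  -- Bessel bound for finite partial sums
  have hfB : ∀ (x : K) (s : Finset I), ∑ i ∈ s, ‖⟪x, f i⟫_ℂ‖ ^ 2 ≤ ‖x‖ ^ 2 := by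
    intro x s
    calc ∑ i ∈ s, ‖⟪x, f i⟫_ℂ‖ ^ 2 ≤ ∑' i : I, ‖⟪x, f i⟫_ℂ‖ ^ 2 :=
          Summable.sum_le_tsum s (fun i _ => by positivity) (hsb x)
      _ = ‖x‖ ^ 2 := hf x
  have bessel : ∀ s : Finset I, ‖∑ i ∈ s, c i • f i‖ ^ 2 ≤ ∑ i ∈ s, ‖c i‖ ^ 2 := by
    intro s
    set x : K := ∑ i ∈ s, c i • f i with hxdef
    by_cases hx0 : x = 0
    · have hnn : (0:ℝ) ≤ ∑ i ∈ s, ‖c i‖ ^ 2 := Finset.sum_nonneg fun i _ => by positivity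
      rw [hx0, norm_zero]
      simpa using hnn
    have hxpos : (0:ℝ) < ‖x‖ ^ 2 := pow_pos (norm_pos_iff.mpr hx0) 2
    have hnx : (‖x‖ : ℝ) ^ 2 = ‖⟪x, x⟫_ℂ‖ := by
      rw [@inner_self_eq_norm_sq_to_K ℂ]
      simp
    have hexp : ⟪x, x⟫_ℂ = ∑ i ∈ s, c i * ⟪x, f i⟫_ℂ := by
      rw [hxdef]
      conv_lhs => rw [inner_sum]
      exact Finset.sum_congr rfl (fun i _ => by rw [inner_smul_right])
    have h1 : ‖x‖ ^ 2 ≤ ∑ i ∈ s, ‖c i‖ * ‖⟪x, f i⟫_ℂ‖ := by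
      rw [hnx, hexp]
      calc ‖∑ i ∈ s, c i * ⟪x, f i⟫_ℂ‖ ≤ ∑ i ∈ s, ‖c i * ⟪x, f i⟫_ℂ‖ :=
            norm_sum_le s _
        _ = ∑ i ∈ s, ‖c i‖ * ‖⟪x, f i⟫_ℂ‖ := by
            exact Finset.sum_congr rfl (fun i _ => norm_mul _ _)
    have h2 : (∑ i ∈ s, ‖c i‖ * ‖⟪x, f i⟫_ℂ‖) ^ 2
        ≤ (∑ i ∈ s, ‖c i‖ ^ 2) * ∑ i ∈ s, ‖⟪x, f i⟫_ℂ‖ ^ 2 :=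
      Finset.sum_mul_sq_le_sq_mul_sq s _ _
    have h3 : (‖x‖ ^ 2) ^ 2 ≤ (∑ i ∈ s, ‖c i‖ ^ 2) * ‖x‖ ^ 2 := by
      calc (‖x‖ ^ 2) ^ 2 ≤ (∑ i ∈ s, ‖c i‖ * ‖⟪x, f i⟫_ℂ‖) ^ 2 := by
            apply pow_le_pow_left₀ (by positivity) h1
        _ ≤ (∑ i ∈ s, ‖c i‖ ^ 2) * ∑ i ∈ s, ‖⟪x, f i⟫_ℂ‖ ^ 2 := h2
        _ ≤ (∑ i ∈ s, ‖c i‖ ^ 2) * ‖x‖ ^ 2 := by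
            apply mul_le_mul_of_nonneg_left (hfB x s) (Finset.sum_nonneg fun i _ => sq_nonneg _)
    exact le_of_sq_le_mul hxpos h3
  -- summability of the series
  have hsumm : Summable (fun i : I => c i • f i) := by
    rw [summable_iff_vanishing_norm]
    intro ε hε
    obtain ⟨s, hs⟩ := summable_iff_vanishing_norm.mp hcs (ε ^ 2) (by positivity)
    refine ⟨s, fun t ht => ?_⟩
    have h2 : ∑ i ∈ t, ‖c i‖ ^ 2 < ε ^ 2 := by
      have := hs t ht
      rwa [Real.norm_of_nonneg (by positivity)] at this
    have h1 := bessel t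
    have : ‖∑ i ∈ t, c i • f i‖ ^ 2 < ε ^ 2 := lt_of_le_of_lt h1 h2
    exact lt_of_pow_lt_pow_left₀ 2 hε.le this
  obtain ⟨y, hy⟩ := hsumm
  have h0 : HasSum (fun i : I => c i * ⟪y, f i⟫_ℂ) ⟪y, y⟫_ℂ := by
    have := hy.mapL (innerSL ℂ y)
    simpa [inner_smul_right] using this
  have hyy : ⟪y, y⟫_ℂ = 0 := h0.unique (hcross g y)
  have hy0 : y = 0 := inner_self_eq_zero.mp hyy
  rwa [hy0] at hy
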